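/- Let G = W(H) be a whisker graph, ℓ the length of a shortest odd cycle of H (assuming one exists), F a facet of MF^q(G), and f ⊆ F a face containing q−1 pairwise disjoint edges of which m lie in E(H). If m < ⌊ℓ/2⌋, then |F| = n + q − 1. -/

import Mathlib

variable {V : Type*}

/-- `M` is a set of pairwise disjoint edges of `G` with all endpoints in `F`. -/
def IsMatchingOn (G : SimpleGraph V) (F : Finset V) (M : Finset (Sym2 V)) : Prop :=
  (∀ e ∈ M, e ∈ G.edgeSet) ∧
  (∀ e ∈ M, ∀ v ∈ e, v ∈ F) ∧
  (∀ e ∈ M, ∀ e' ∈ M, e ≠ e' → ∀ v ∈ e, v ∉ e')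

/-- `F` is a face of the `q`-matching-free complex `MF^q(G)`. -/
def MFFace (G : SimpleGraph V) (q : ℕ) (F : Finset V) : Prop :=
  ¬ ∃ M : Finset (Sym2 V), IsMatchingOn G F M ∧ M.card = q

/-- `F` is a facet (maximal face) of the complex with face predicate `faces`. -/
def IsFacet (faces : Finset V → Prop) (F : Finset V) : Prop :=
  faces F ∧ ∀ F', faces F' → F ⊆ F' → F = F'

/-- Even-connection of `u` and `v` with respect to the pairwise disjoint edges in `M`. -/
def EvenConnected (G : SimpleGraph V) (M : Finset (Sym2 V)) (u v : V) : Prop :=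
  ∃ (r : ℕ) (p : ℕ → V), 1 ≤ r ∧ p 0 = u ∧ p (2 * r + 1) = v ∧
    (∀ k, k ≤ 2 * r → G.Adj (p k) (p (k + 1))) ∧
    (∀ k, k < r → s(p (2 * k + 1), p (2 * k + 2)) ∈ M) ∧
    (∀ k l, k < r → l < r →
      s(p (2 * k + 1), p (2 * k + 2)) = s(p (2 * l + 1), p (2 * l + 2)) → k = l)

/-- The set of vertices covered by the edges in `M`. -/
def mSupp (M : Finset (Sym2 V)) : Set V := {v | ∃ e ∈ M, v ∈ e}

/-- The even-connection graph `G^{e₁⋯e_q}` (vertices covered by `M` are isolated). -/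
def evenConnGraph (G : SimpleGraph V) (M : Finset (Sym2 V)) : SimpleGraph V where
  Adj x y := x ≠ y ∧ x ∉ mSupp M ∧ y ∉ mSupp M ∧
    (G.Adj x y ∨ EvenConnected G M x y ∨ EvenConnected G M y x)
  symm := by
    refine ⟨?_⟩
    rintro x y ⟨hne, hx, hy, h⟩
    refine ⟨hne.symm, hy, hx, ?_⟩
    rcases h with h | h | h
    · exact Or.inl h.symm
    · exact Or.inr (Or.inr h)
    · exact Or.inr (Or.inl h)
  loopless := ⟨fun x h => h.1 rfl⟩

/-- Delete a set of vertices from a graph (keeping them as isolated vertices). -/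
def delSet (G : SimpleGraph V) (S : Set V) : SimpleGraph V where
  Adj x y := G.Adj x y ∧ x ∉ S ∧ y ∉ S
  symm := ⟨fun x y ⟨h, hx, hy⟩ => ⟨h.symm, hy, hx⟩⟩
  loopless := ⟨fun x ⟨h, _, _⟩ => G.loopless.irrefl x h⟩

/-- The whisker graph `W(H)`: each vertex `x` (as `Sum.inl x`) gets a pendant
whisker vertex `Sum.inr x`. -/
def whisker (H : SimpleGraph V) : SimpleGraph (V ⊕ V) where
  Adj x y :=
    (∃ a b, x = Sum.inl a ∧ y = Sum.inl b ∧ H.Adj a b) ∨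
    (∃ a, (x = Sum.inl a ∧ y = Sum.inr a) ∨ (x = Sum.inr a ∧ y = Sum.inl a))
  symm := by
    refine ⟨?_⟩
    rintro x y (⟨a, b, hx, hy, hab⟩ | ⟨a, h | h⟩)
    · exact Or.inl ⟨b, a, hy, hx, hab.symm⟩
    · exact Or.inr ⟨a, Or.inr ⟨h.2, h.1⟩⟩
    · exact Or.inr ⟨a, Or.inl ⟨h.2, h.1⟩⟩
  loopless := by
    refine ⟨?_⟩
    rintro x (⟨a, b, hx, hy, hab⟩ | ⟨a, ⟨h1, h2⟩ | ⟨h1, h2⟩⟩)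
    · obtain rfl := Sum.inl_injective (hx ▸ hy : (Sum.inl a : V ⊕ V) = Sum.inl b)
      exact H.loopless.irrefl a hab
    · exact Sum.inl_ne_inr (h1 ▸ h2 : (Sum.inl a : V ⊕ V) = Sum.inr a)
    · exact Sum.inr_ne_inl (h1 ▸ h2 : (Sum.inr a : V ⊕ V) = Sum.inl a)

/-- Shellability of the complex with face predicate `faces`: there is a linear
order `F 0, F 1, …` of all facets such that each facet meets the union of the
previous ones in a pure subcomplex of codimension one. -/
def Shellable (faces : Finset V → Prop) : Prop :=
  ∃ (t : ℕ) (F : Fin t → Finset V),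
    (∀ i, IsFacet faces (F i)) ∧
    (∀ F', IsFacet faces F' → ∃ i, F' = F i) ∧
    Function.Injective F ∧
    ∀ k : Fin t, 0 < (k : ℕ) → ∀ σ : Finset V, σ ⊆ F k →
      (∃ i, i < k ∧ σ ⊆ F i) →
      ∃ τ : Finset V, σ ⊆ τ ∧ τ ⊆ F k ∧ (∃ i, i < k ∧ τ ⊆ F i) ∧
        τ.card = (F k).card - 1

/-- Vertex decomposability of the complex with face predicate `faces`. -/
inductive VertexDecomposable [DecidableEq V] : (Finset V → Prop) → Prop
  | simplex (faces : Finset V → Prop) (F : Finset V)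
      (h : ∀ F', faces F' ↔ F' ⊆ F) : VertexDecomposable faces
  | shed (faces : Finset V → Prop) (v : V)
      (hdel : VertexDecomposable (fun F => faces F ∧ v ∉ F))
      (hlink : VertexDecomposable (fun F => v ∉ F ∧ faces (insert v F)))
      (hshed : ∀ F, v ∉ F → faces (insert v F) →
        ¬ IsFacet (fun F' => faces F' ∧ v ∉ F') F) :
      VertexDecomposable faces

set_option linter.unusedVariables false
set_option linter.unusedSectionVars false
attribute [local instance] Classical.propDecidable

namespace Stmt11

open Sum

variable {V : Type*} [DecidableEq V] {H : SimpleGraph V}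

/-- H-type edges: both endpoints are original (left) vertices. -/
def Htype (e : Sym2 (V ⊕ V)) : Prop := ∀ v ∈ e, ∃ a : V, v = Sum.inl a

lemma edge_class {e : Sym2 (V ⊕ V)} (he : e ∈ (whisker H).edgeSet) :
    (∃ a b, H.Adj a b ∧ e = s(inl a, inl b)) ∨ ∃ a, e = s(inl a, inr a) := by
  induction e with
  | _ x y =>
    rw [SimpleGraph.mem_edgeSet] at he
    rcases he with ⟨a, b, rfl, rfl, hab⟩ | ⟨a, ⟨rfl, rfl⟩ | ⟨rfl, rfl⟩⟩
    · exact Or.inl ⟨a, b, hab, rfl⟩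
    · exact Or.inr ⟨a, rfl⟩
    · exact Or.inr ⟨a, Sym2.eq_swap⟩

lemma adj_of_H_edge {a b : V} (he : s(inl a, inl b) ∈ (whisker H).edgeSet) :
    H.Adj a b := by
  rw [SimpleGraph.mem_edgeSet] at he
  rcases he with ⟨a', b', h1, h2, hab⟩ | ⟨a', ⟨h1, h2⟩ | ⟨h1, h2⟩⟩
  · rw [Sum.inl.injEq] at h1 h2; subst h1; subst h2; exact hab
  · exact absurd h2 (by simp)
  · exact absurd h1 (by simp)

lemma inr_mem_edge {e : Sym2 (V ⊕ V)} {j : V} (he : e ∈ (whisker H).edgeSet)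
    (hj : inr j ∈ e) : e = s(inl j, inr j) := by
  rcases edge_class he with ⟨a, b, _, rfl⟩ | ⟨a, rfl⟩
  · rw [Sym2.mem_iff] at hj; rcases hj with h | h <;> simp at h
  · rw [Sym2.mem_iff] at hj
    rcases hj with h | h
    · simp at h
    · rw [Sum.inr.injEq] at h; subst h; rfl

lemma Htype_elim {e : Sym2 (V ⊕ V)} (he : e ∈ (whisker H).edgeSet) (h : Htype e) :
    ∃ a b, H.Adj a b ∧ e = s(inl a, inl b) := by
  rcases edge_class he with h' | ⟨a, rfl⟩
  · exact h'
  · exact absurd (h (inr a) (by simp)) (by simp)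

lemma not_Htype_elim {e : Sym2 (V ⊕ V)} (he : e ∈ (whisker H).edgeSet)
    (h : ¬ Htype e) : ∃ a, e = s(inl a, inr a) := by
  rcases edge_class he with ⟨a, b, _, rfl⟩ | h'
  · refine absurd ?_ h
    intro v hv; rw [Sym2.mem_iff] at hv
    rcases hv with rfl | rfl
    exacts [⟨a, rfl⟩, ⟨b, rfl⟩]
  · exact h'

lemma Htype_of_inl {a b : V} : Htype (s(inl a, inl b) : Sym2 (V ⊕ V)) := by
  intro v hv; rw [Sym2.mem_iff] at hv
  rcases hv with rfl | rfl; exacts [⟨a, rfl⟩, ⟨b, rfl⟩]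

lemma edge_ne {e : Sym2 (V ⊕ V)} (he : e ∈ (whisker H).edgeSet) :
    ∃ x y, x ≠ y ∧ e = s(x, y) := by
  induction e with
  | _ x y => exact ⟨x, y, (whisker H).ne_of_adj ((whisker H).mem_edgeSet.1 he), rfl⟩

section Matching

variable {G : SimpleGraph (V ⊕ V)} {F : Finset (V ⊕ V)} {M : Finset (Sym2 (V ⊕ V))}

lemma matching_unique (hM : IsMatchingOn G F M) {e e' : Sym2 (V ⊕ V)} (he : e ∈ M)
    (he' : e' ∈ M) {v : V ⊕ V} (hv : v ∈ e) (hv' : v ∈ e') : e = e' := by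
  by_contra h
  exact hM.2.2 e he e' he' h v hv hv'

lemma mem_mSupp {v : V ⊕ V} : v ∈ mSupp M ↔ ∃ e ∈ M, v ∈ e := Iff.rfl

lemma matchingOn_mono {f F : Finset (V ⊕ V)} (hfF : f ⊆ F)
    (hM : IsMatchingOn G f M) : IsMatchingOn G F M :=
  ⟨hM.1, fun e he v hv => hfF (hM.2.1 e he v hv), hM.2.2⟩

end Matching

end Stmt11
namespace Stmt11
open Sum
set_option maxHeartbeats 1000000

variable {V : Type*} [DecidableEq V] {H : SimpleGraph V}
variable {q : ℕ} {F : Finset (V ⊕ V)}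

/-- No `q`-matching on a face. -/
lemma no_q_matching (hF : MFFace (whisker H) q F) {K : Finset (Sym2 (V ⊕ V))}
    (hK : IsMatchingOn (whisker H) F K) (hKc : K.card = q) : False :=
  hF ⟨K, hK, hKc⟩

/-- Every pair is met by a facet. -/
lemma pairs_cover (hF : IsFacet (MFFace (whisker H) q) F) (i : V) :
    inl i ∈ F ∨ inr i ∈ F := by
  by_contra h
  push_neg at h
  obtain ⟨h1, h2⟩ := h
  have hface : MFFace (whisker H) q (insert (inr i) F) := by
    rintro ⟨K, hK, hKc⟩
    refine no_q_matching hF.1 (K := K) ⟨hK.1, ?_, hK.2.2⟩ hKc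
    intro e he v hv
    have hvF : v ∈ insert (inr i) F := hK.2.1 e he v hv
    rcases Finset.mem_insert.1 hvF with rfl | hvF
    · have heq := inr_mem_edge (hK.1 e he) hv
      have hli : inl i ∈ e := by rw [heq]; simp
      have : inl i ∈ insert (inr i) F := hK.2.1 e he _ hli
      rcases Finset.mem_insert.1 this with h | h
      · exact absurd h (by simp)
      · exact absurd h h1
    · exact hvF
  have := hF.2 _ hface (Finset.subset_insert _ _)
  exact h2 (this ▸ Finset.mem_insert_self _ _)

/-- For `u` with whisker vertex outside `F`, there is a `(q-1)`-matching on `F` avoiding `inl u`. -/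
lemma exists_avoiding (hF : IsFacet (MFFace (whisker H) q) F) {u : V}
    (hu : inr u ∉ F) :
    ∃ N : Finset (Sym2 (V ⊕ V)), IsMatchingOn (whisker H) F N ∧ N.card = q - 1 ∧
      inl u ∉ mSupp N := by
  have hnotface : ¬ MFFace (whisker H) q (insert (inr u) F) := by
    intro hface
    exact hu ((hF.2 _ hface (Finset.subset_insert _ _)) ▸ Finset.mem_insert_self _ _)
  rw [MFFace, not_not] at hnotface
  obtain ⟨K, hK, hKc⟩ := hnotface
  by_cases hmem : ∃ e ∈ K, inr u ∈ e
  · obtain ⟨e, he, hue⟩ := hmem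
    have hee : e = s(inl u, inr u) := inr_mem_edge (hK.1 e he) hue
    refine ⟨K.erase e, ⟨fun e' he' => hK.1 e' (Finset.mem_of_mem_erase he'),
      ?_, fun e' he' e'' he'' hne v => hK.2.2 e' (Finset.mem_of_mem_erase he') e''
        (Finset.mem_of_mem_erase he'') hne v⟩, ?_, ?_⟩
    · intro e' he' v hv
      have hne : e' ≠ e := Finset.ne_of_mem_erase he'
      have hvF : v ∈ insert (inr u) F := hK.2.1 e' (Finset.mem_of_mem_erase he') v hv
      rcases Finset.mem_insert.1 hvF with rfl | hvF
      · exact absurd hue (hK.2.2 e' (Finset.mem_of_mem_erase he') e he hne _ hv)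
      · exact hvF
    · rw [Finset.card_erase_of_mem he, hKc]
    · rintro ⟨e', he', hv⟩
      have hne : e' ≠ e := Finset.ne_of_mem_erase he'
      have : inl u ∈ e := by rw [hee]; simp
      exact hK.2.2 e' (Finset.mem_of_mem_erase he') e he hne _ hv this
  · push_neg at hmem
    exfalso
    refine no_q_matching hF.1 (K := K) ⟨hK.1, ?_, hK.2.2⟩ hKc
    intro e he v hv
    rcases Finset.mem_insert.1 (hK.2.1 e he v hv) with rfl | h
    · exact absurd hv (hmem e he)
    · exact h

/-- A set of indices whose whisker pairs lie in `F` gives a matching. -/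
lemma whisker_matching {S : Finset V} (hS : ∀ i ∈ S, inl i ∈ F ∧ inr i ∈ F) :
    IsMatchingOn (whisker H) F (S.image (fun i => s(inl i, inr i))) ∧
      (S.image (fun i => s(inl i, inr i))).card = S.card := by
  have hinj : Set.InjOn (fun i => (s(inl i, inr i) : Sym2 (V ⊕ V))) S := by
    intro i _ j _ hij
    simp only [Sym2.eq_iff] at hij
    rcases hij with ⟨h, _⟩ | ⟨h, _⟩ <;> simp_all
  constructor
  · refine ⟨?_, ?_, ?_⟩
    · intro e he
      obtain ⟨i, _, rfl⟩ := Finset.mem_image.1 he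
      rw [SimpleGraph.mem_edgeSet]
      exact Or.inr ⟨i, Or.inl ⟨rfl, rfl⟩⟩
    · intro e he v hv
      obtain ⟨i, hi, rfl⟩ := Finset.mem_image.1 he
      rw [Sym2.mem_iff] at hv
      rcases hv with rfl | rfl
      exacts [(hS i hi).1, (hS i hi).2]
    · intro e he e' he' hne v hv hv'
      obtain ⟨i, hi, rfl⟩ := Finset.mem_image.1 he
      obtain ⟨j, hj, rfl⟩ := Finset.mem_image.1 he'
      rw [Sym2.mem_iff] at hv hv'
      have : i ≠ j := fun h => hne (by rw [h])
      rcases hv with rfl | rfl <;> rcases hv' with h | h <;> simp_all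
  · exact Finset.card_image_of_injOn hinj

end Stmt11
namespace Stmt11
open Sum
set_option maxHeartbeats 1000000

variable {V : Type*} [DecidableEq V] {H : SimpleGraph V}
variable {q : ℕ} {F : Finset (V ⊕ V)}

/-- The number of H-edges of a set of edges. -/
noncomputable def HC (M : Finset (Sym2 (V ⊕ V))) : ℕ :=
  (M.filter Htype).card

lemma swap_reduce {M : Finset (Sym2 (V ⊕ V))} (hM : IsMatchingOn (whisker H) F M)
    {a b : V} (he : s(inl a, inl b) ∈ M) (haF : inr a ∈ F) :
    ∃ M', IsMatchingOn (whisker H) F M' ∧ M'.card = M.card ∧ HC M' + 1 = HC M := by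
  set e : Sym2 (V ⊕ V) := s(inl a, inl b) with he_def
  have hae : inl a ∈ e := by rw [he_def]; simp
  have hnr : inr a ∉ mSupp M := by
    rintro ⟨e', he', hv⟩
    have h1 : e' = s(inl a, inr a) := inr_mem_edge (hM.1 e' he') hv
    have h2 : inl a ∈ e' := by rw [h1]; simp
    have h3 : e' = e := matching_unique hM he' he h2 hae
    have h4 : inr a ∈ e := by rw [← h3, h1]; simp
    rw [he_def] at h4
    simp at h4
  set w : Sym2 (V ⊕ V) := s(inl a, inr a) with hw_def
  have hwG : w ∈ (whisker H).edgeSet := by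
    rw [SimpleGraph.mem_edgeSet]; exact Or.inr ⟨a, Or.inl ⟨rfl, rfl⟩⟩
  have hwM : w ∉ M := fun hw => hnr ⟨w, hw, by rw [hw_def]; simp⟩
  have hwe : w ∉ M.erase e := fun hw => hwM (Finset.mem_of_mem_erase hw)
  refine ⟨insert w (M.erase e), ⟨?_, ?_, ?_⟩, ?_, ?_⟩
  · intro e' he'
    rcases Finset.mem_insert.1 he' with rfl | h
    · exact hwG
    · exact hM.1 e' (Finset.mem_of_mem_erase h)
  · intro e' he' v hv
    rcases Finset.mem_insert.1 he' with rfl | h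
    · rw [hw_def] at hv; rw [Sym2.mem_iff] at hv
      rcases hv with rfl | rfl
      · exact hM.2.1 e he _ hae
      · exact haF
    · exact hM.2.1 e' (Finset.mem_of_mem_erase h) v hv
  · intro e1 he1 e2 he2 hne v hv
    rcases Finset.mem_insert.1 he1 with rfl | h1 <;>
      rcases Finset.mem_insert.1 he2 with rfl | h2
    · exact absurd rfl hne
    · -- v ∈ w, show v ∉ e2 with e2 ∈ erase
      intro hv2
      rw [hw_def] at hv; rw [Sym2.mem_iff] at hv
      rcases hv with rfl | rfl
      · exact Finset.ne_of_mem_erase h2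
          (matching_unique hM (Finset.mem_of_mem_erase h2) he hv2 hae)
      · exact hnr ⟨e2, Finset.mem_of_mem_erase h2, hv2⟩
    · intro hv2
      rw [hw_def] at hv2; rw [Sym2.mem_iff] at hv2
      rcases hv2 with rfl | rfl
      · exact Finset.ne_of_mem_erase h1
          (matching_unique hM (Finset.mem_of_mem_erase h1) he hv hae) 
      · exact hnr ⟨e1, Finset.mem_of_mem_erase h1, hv⟩
    · exact hM.2.2 e1 (Finset.mem_of_mem_erase h1) e2 (Finset.mem_of_mem_erase h2) hne v hv
  · rw [Finset.card_insert_of_notMem hwe, Finset.card_erase_of_mem he]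
    have : 1 ≤ M.card := Finset.card_pos.2 ⟨e, he⟩
    omega
  · have hwH : ¬ Htype w := by
      intro h
      obtain ⟨c, hc⟩ := h (inr a) (by rw [hw_def]; simp)
      simp at hc
    have heH : Htype e := by rw [he_def]; exact Htype_of_inl
    rw [HC, HC, Finset.filter_insert, if_neg hwH, Finset.filter_erase,
      Finset.card_erase_of_mem (Finset.mem_filter.2 ⟨he, heH⟩)]
    have : 1 ≤ (M.filter Htype).card := Finset.card_pos.2 ⟨e, Finset.mem_filter.2 ⟨he, heH⟩⟩
    omega

/-- H-edges of a minimum-H-count `(q-1)`-matching have no available whisker partner. -/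
lemma min_B {M₀ : Finset (Sym2 (V ⊕ V))} (hM₀ : IsMatchingOn (whisker H) F M₀)
    (hc : M₀.card = q - 1)
    (hmin : ∀ K, IsMatchingOn (whisker H) F K → K.card = q - 1 → HC M₀ ≤ HC K) :
    ∀ e ∈ M₀, Htype e → ∀ a : V, inl a ∈ e → inr a ∉ F := by
  intro e he hH a ha haF
  obtain ⟨c, d, hcd, hecd⟩ := Htype_elim (hM₀.1 e he) hH
  have : e = s(inl a, inl c) ∨ e = s(inl a, inl d) := by
    rw [hecd] at ha; rw [Sym2.mem_iff] at ha
    rcases ha with h | h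
    · rw [Sum.inl.injEq] at h; subst h; exact Or.inr hecd
    · rw [Sum.inl.injEq] at h; subst h
      exact Or.inl (hecd.trans Sym2.eq_swap)
  rcases this with heq | heq <;>
  · rw [heq] at he
    obtain ⟨M', hM', hcard, hHC⟩ := swap_reduce hM₀ he haF
    have := hmin M' hM' (hcard.trans hc)
    omega

/-- Counting `|F| = n + |A|`. -/
lemma card_F_eq [Fintype V] (hcov : ∀ i : V, inl i ∈ F ∨ inr i ∈ F) :
    F.card = Fintype.card V +
      (Finset.univ.filter (fun i : V => inl i ∈ F ∧ inr i ∈ F)).card := by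
  classical
  set L := Finset.univ.filter (fun i : V => inl i ∈ F) with hL
  set R := Finset.univ.filter (fun i : V => inr i ∈ F) with hR
  have hFeq : F = (L.image inl) ∪ (R.image inr) := by
    ext x
    cases x with
    | inl a =>
      simp [hL, hR]
    | inr a =>
      simp [hL, hR]
  have hdisj : Disjoint (L.image inl) (R.image (inr : V → V ⊕ V)) := by
    rw [Finset.disjoint_left]
    intro x hx hx'
    obtain ⟨a, _, rfl⟩ := Finset.mem_image.1 hx
    obtain ⟨b, _, h⟩ := Finset.mem_image.1 hx'
    exact absurd h (by simp)
  have hcard : F.card = L.card + R.card := by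
    rw [hFeq, Finset.card_union_of_disjoint hdisj,
      Finset.card_image_of_injective _ Sum.inl_injective,
      Finset.card_image_of_injective _ Sum.inr_injective]
  have hunion : L ∪ R = Finset.univ := by
    ext i
    simp only [Finset.mem_union, hL, hR, Finset.mem_filter, Finset.mem_univ, true_and,
      iff_true]
    exact hcov i
  have hinter : L ∩ R = Finset.univ.filter (fun i : V => inl i ∈ F ∧ inr i ∈ F) := by
    ext i
    simp [hL, hR]
  have := Finset.card_union_add_card_inter L R
  rw [hunion, hinter] at this
  rw [Finset.card_univ] at this
  omega

end Stmt11
namespace Stmt11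
open Sum
set_option maxHeartbeats 1000000

variable {V : Type*} [DecidableEq V] {H : SimpleGraph V}
variable {q : ℕ} {F : Finset (V ⊕ V)}

lemma other_end {e : Sym2 (V ⊕ V)} (he : e ∈ (whisker H).edgeSet) {v : V ⊕ V}
    (hv : v ∈ e) : ∃ w, w ≠ v ∧ e = s(v, w) := by
  obtain ⟨x, y, hxy, rfl⟩ := edge_ne he
  rw [Sym2.mem_iff] at hv
  rcases hv with rfl | rfl
  · exact ⟨y, fun h => hxy h.symm, rfl⟩
  · exact ⟨x, hxy, Sym2.eq_swap⟩

/-- An alternating path for the pair of matchings `M`, `N`, starting at `x`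
with an `M`-edge. -/
def GoodPath (M N : Finset (Sym2 (V ⊕ V))) (x : V ⊕ V) (p : ℕ → V ⊕ V) (t : ℕ) : Prop :=
  1 ≤ t ∧ p 0 = x ∧
  (∀ i, i < t → (i % 2 = 0 → s(p i, p (i+1)) ∈ M ∧ s(p i, p (i+1)) ∉ N) ∧
                (i % 2 = 1 → s(p i, p (i+1)) ∈ N ∧ s(p i, p (i+1)) ∉ M)) ∧
  (∀ i j, i ≤ t → j ≤ t → p i = p j → i = j)

section GoodPath

variable {M N : Finset (Sym2 (V ⊕ V))} {x : V ⊕ V} {p : ℕ → V ⊕ V} {t : ℕ}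

lemma gp_edge_M (hgp : GoodPath M N x p t) {i : ℕ} (hi : i < t) (hpar : i % 2 = 0) :
    s(p i, p (i+1)) ∈ M ∧ s(p i, p (i+1)) ∉ N := (hgp.2.2.1 i hi).1 hpar

lemma gp_edge_N (hgp : GoodPath M N x p t) {i : ℕ} (hi : i < t) (hpar : i % 2 = 1) :
    s(p i, p (i+1)) ∈ N ∧ s(p i, p (i+1)) ∉ M := (hgp.2.2.1 i hi).2 hpar

/-- Location of `M`-edges along a good path. -/
lemma gp_M_loc (hM : IsMatchingOn (whisker H) F M) (hgp : GoodPath M N x p t)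
    {j : ℕ} {g : Sym2 (V ⊕ V)} (hj : j ≤ t) (hg : g ∈ M) (hpj : p j ∈ g) :
    (j % 2 = 0 ∧ j < t ∧ g = s(p j, p (j+1))) ∨
    (j % 2 = 1 ∧ g = s(p (j-1), p j)) ∨ (j = t ∧ t % 2 = 0) := by
  rcases Nat.even_or_odd j with hpar | hpar
  · have hpar : j % 2 = 0 := Nat.even_iff.1 hpar
    rcases lt_or_eq_of_le hj with hlt | rfl
    · have h := gp_edge_M hgp hlt hpar
      exact Or.inl ⟨hpar, hlt, matching_unique hM hg h.1 hpj (by simp)⟩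
    · exact Or.inr (Or.inr ⟨rfl, hpar⟩)
  · have hpar : j % 2 = 1 := Nat.odd_iff.1 hpar
    have hj1 : 1 ≤ j := by omega
    have hlt : j - 1 < t := by omega
    have hpar' : (j-1) % 2 = 0 := by omega
    have h := gp_edge_M hgp hlt hpar'
    have hmem : p j ∈ s(p (j-1), p (j-1+1)) := by
      rw [show j - 1 + 1 = j by omega]; simp
    refine Or.inr (Or.inl ⟨hpar, ?_⟩)
    have := matching_unique hM hg h.1 hpj hmem
    rwa [show j - 1 + 1 = j by omega] at this

/-- Location of `N`-edges along a good path. -/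
lemma gp_N_loc (hN : IsMatchingOn (whisker H) F N) (hgp : GoodPath M N x p t)
    (hxN : x ∉ mSupp N) {j : ℕ} {g : Sym2 (V ⊕ V)} (hj : j ≤ t) (hg : g ∈ N)
    (hpj : p j ∈ g) :
    (j % 2 = 1 ∧ j < t ∧ g = s(p j, p (j+1))) ∨
    (j % 2 = 0 ∧ 1 ≤ j ∧ g = s(p (j-1), p j)) ∨ (j = t ∧ t % 2 = 1) := by
  rcases Nat.eq_zero_or_pos j with rfl | hj0
  · exact absurd ⟨g, hg, hgp.2.1 ▸ hpj⟩ hxN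
  rcases Nat.even_or_odd j with hpar | hpar
  · have hpar : j % 2 = 0 := Nat.even_iff.1 hpar
    have hlt : j - 1 < t := by omega
    have hpar' : (j-1) % 2 = 1 := by omega
    have h := gp_edge_N hgp hlt hpar'
    have hmem : p j ∈ s(p (j-1), p (j-1+1)) := by
      rw [show j - 1 + 1 = j by omega]; simp
    refine Or.inr (Or.inl ⟨hpar, hj0, ?_⟩)
    have := matching_unique hN hg h.1 hpj hmem
    rwa [show j - 1 + 1 = j by omega] at this
  · have hpar : j % 2 = 1 := Nat.odd_iff.1 hpar
    rcases lt_or_eq_of_le hj with hlt | rfl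
    · have h := gp_edge_N hgp hlt hpar
      exact Or.inl ⟨hpar, hlt, matching_unique hN hg h.1 hpj (by simp)⟩
    · exact Or.inr (Or.inr ⟨rfl, hpar⟩)

/-- Base path of length one. -/
lemma gp_base (hM : IsMatchingOn (whisker H) F M) (hxN : x ∉ mSupp N)
    (hxM : x ∈ mSupp M) : ∃ p, GoodPath M N x p 1 := by
  obtain ⟨e, he, hxe⟩ := hxM
  obtain ⟨w, hwx, hew⟩ := other_end (hM.1 e he) hxe
  set p : ℕ → V ⊕ V := fun k => if k = 0 then x else w with hp
  have hp0 : p 0 = x := if_pos rfl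
  have hp1 : p 1 = w := if_neg (by omega)
  refine ⟨p, le_refl 1, hp0, ?_, ?_⟩
  · intro i hi
    have hi0 : i = 0 := by omega
    subst hi0
    constructor
    · intro _
      rw [hp0, hp1, ← hew]
      exact ⟨he, fun hc => hxN ⟨e, hc, hxe⟩⟩
    · intro h; omega
  · intro i j hi hj hij
    interval_cases i <;> interval_cases j <;> simp_all

/-- Extension of a good path. -/
lemma gp_ext (hM : IsMatchingOn (whisker H) F M) (hN : IsMatchingOn (whisker H) F N)
    (hgp : GoodPath M N x p t) (hxN : x ∉ mSupp N)
    (hcont : (t % 2 = 0 ∧ p t ∈ mSupp M) ∨ (t % 2 = 1 ∧ p t ∈ mSupp N)) :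
    ∃ p', GoodPath M N x p' (t+1) := by
  have hinj := hgp.2.2.2
  have ht1 : 1 ≤ t := hgp.1
  rcases hcont with ⟨hpar, g, hg, hpt⟩ | ⟨hpar, g, hg, hpt⟩
  · -- t even, extend with the M-edge of p t
    have ht2 : 2 ≤ t := by omega
    have hgN : g ∉ N := by
      intro hgN'
      have h := gp_edge_N hgp (show t - 1 < t by omega) (by omega)
      rw [show t - 1 + 1 = t by omega] at h
      have hmem : p t ∈ s(p (t-1), p t) := by simp
      have heq := matching_unique hN hgN' h.1 hpt hmem
      exact h.2 (heq ▸ hg)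
    obtain ⟨w, hwpt, hgw⟩ := other_end (hM.1 g hg) hpt
    have hwnew : ∀ j, j ≤ t → w ≠ p j := by
      intro j hj hwj
      have hwg : p j ∈ g := hwj ▸ (by rw [hgw]; simp)
      rcases gp_M_loc hM hgp hj hg hwg with ⟨hj0, hjt, hgeq⟩ | ⟨hj1, hgeq⟩ | ⟨rfl, _⟩
      · have : p t ∈ s(p j, p (j+1)) := hgeq ▸ hpt
        rw [Sym2.mem_iff] at this
        rcases this with h | h
        · exact absurd (hinj t j le_rfl hj h) (by omega)
        · have := hinj t (j+1) le_rfl (by omega) h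
          omega
      · have : p t ∈ s(p (j-1), p j) := hgeq ▸ hpt
        rw [Sym2.mem_iff] at this
        rcases this with h | h
        · have := hinj t (j-1) le_rfl (by omega) h
          omega
        · have := hinj t j le_rfl hj h
          omega
      · exact hwpt (hwj.trans rfl)
    set p' : ℕ → V ⊕ V := fun k => if k = t + 1 then w else p k with hp'
    have hpe : ∀ k, k ≠ t + 1 → p' k = p k := fun k hk => if_neg hk
    have hpw : p' (t+1) = w := if_pos rfl
    refine ⟨p', by omega, ?_, ?_, ?_⟩
    · rw [hpe 0 (by omega)]
      exact hgp.2.1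
    · intro i hi
      rcases lt_or_eq_of_le (Nat.lt_succ_iff.1 hi) with hilt | rfl
      · rw [hpe i (by omega), hpe (i+1) (by omega)]
        exact hgp.2.2.1 i hilt
      · rw [hpe i (by omega), hpw]
        constructor
        · intro _
          rw [← hgw]
          exact ⟨hg, hgN⟩
        · intro h; omega
    · intro i j hi hj hij
      by_cases hi' : i = t + 1 <;> by_cases hj' : j = t + 1
      · omega
      · subst hi'
        rw [hpw, hpe j hj'] at hij
        exact absurd hij (hwnew j (by omega))
      · subst hj'
        rw [hpw, hpe i hi'] at hij
        exact absurd hij.symm (hwnew i (by omega))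
      · rw [hpe i hi', hpe j hj'] at hij
        exact hinj i j (by omega) (by omega) hij
  · -- t odd, extend with the N-edge of p t
    have hgM : g ∉ M := by
      intro hgM'
      have h := gp_edge_M hgp (show t - 1 < t by omega) (by omega)
      rw [show t - 1 + 1 = t by omega] at h
      have hmem : p t ∈ s(p (t-1), p t) := by simp
      have heq := matching_unique hM hgM' h.1 hpt hmem
      exact h.2 (heq ▸ hg)
    obtain ⟨w, hwpt, hgw⟩ := other_end (hN.1 g hg) hpt
    have hwnew : ∀ j, j ≤ t → w ≠ p j := by
      intro j hj hwj
      have hwg : p j ∈ g := hwj ▸ (by rw [hgw]; simp)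
      rcases gp_N_loc hN hgp hxN hj hg hwg with ⟨hj1, hjt, hgeq⟩ | ⟨hj0, hj1, hgeq⟩ | ⟨rfl, _⟩
      · have : p t ∈ s(p j, p (j+1)) := hgeq ▸ hpt
        rw [Sym2.mem_iff] at this
        rcases this with h | h
        · exact absurd (hinj t j le_rfl hj h) (by omega)
        · have := hinj t (j+1) le_rfl (by omega) h
          omega
      · have : p t ∈ s(p (j-1), p j) := hgeq ▸ hpt
        rw [Sym2.mem_iff] at this
        rcases this with h | h
        · have := hinj t (j-1) le_rfl (by omega) h
          omega
        · have := hinj t j le_rfl hj h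
          omega
      · exact hwpt (hwj.trans rfl)
    set p' : ℕ → V ⊕ V := fun k => if k = t + 1 then w else p k with hp'
    have hpe : ∀ k, k ≠ t + 1 → p' k = p k := fun k hk => if_neg hk
    have hpw : p' (t+1) = w := if_pos rfl
    refine ⟨p', by omega, ?_, ?_, ?_⟩
    · rw [hpe 0 (by omega)]
      exact hgp.2.1
    · intro i hi
      rcases lt_or_eq_of_le (Nat.lt_succ_iff.1 hi) with hilt | rfl
      · rw [hpe i (by omega), hpe (i+1) (by omega)]
        exact hgp.2.2.1 i hilt
      · rw [hpe i (by omega), hpw]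
        constructor
        · intro h; omega
        · intro _
          rw [← hgw]
          exact ⟨hg, hgM⟩
    · intro i j hi hj hij
      by_cases hi' : i = t + 1 <;> by_cases hj' : j = t + 1
      · omega
      · subst hi'
        rw [hpw, hpe j hj'] at hij
        exact absurd hij (hwnew j (by omega))
      · subst hj'
        rw [hpw, hpe i hi'] at hij
        exact absurd hij.symm (hwnew i (by omega))
      · rw [hpe i hi', hpe j hj'] at hij
        exact hinj i j (by omega) (by omega) hij

end GoodPath
end Stmt11
namespace Stmt11
open Sum
set_option maxHeartbeats 2000000

variable {V : Type*} [DecidableEq V] {H : SimpleGraph V}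
variable {q : ℕ} {F : Finset (V ⊕ V)}
variable {M N : Finset (Sym2 (V ⊕ V))} {x : V ⊕ V} {p : ℕ → V ⊕ V} {t : ℕ}

lemma count_parity (t : ℕ) :
    ((Finset.range t).filter (fun i => i % 2 = 0)).card = (t+1)/2 ∧
    ((Finset.range t).filter (fun i => i % 2 = 1)).card = t/2 := by
  induction t with
  | zero => simp
  | succ n ih =>
    rw [Finset.range_add_one, Finset.filter_insert, Finset.filter_insert]
    by_cases h : n % 2 = 0
    · rw [if_pos h, if_neg (by omega)]
      rw [Finset.card_insert_of_notMem (by simp)]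
      omega
    · rw [if_neg h, if_pos (by omega)]
      rw [Finset.card_insert_of_notMem (by simp)]
      omega

lemma gp_edge_inj (hgp : GoodPath M N x p t) {i j : ℕ} (hi : i < t) (hj : j < t)
    (h : s(p i, p (i+1)) = s(p j, p (j+1))) : i = j := by
  have hinj := hgp.2.2.2
  rw [Sym2.eq_iff] at h
  rcases h with ⟨h1, h2⟩ | ⟨h1, h2⟩
  · exact hinj i j (by omega) (by omega) h1
  · have := hinj i (j+1) (by omega) (by omega) h1
    have := hinj (i+1) j (by omega) (by omega) h2
    omega

/-- A maximal alternating path exists. -/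
lemma gp_max [Fintype V] (hM : IsMatchingOn (whisker H) F M)
    (hN : IsMatchingOn (whisker H) F N) (hxN : x ∉ mSupp N) (hxM : x ∈ mSupp M) :
    ∃ p t, GoodPath M N x p t ∧
      ((t % 2 = 0 ∧ p t ∉ mSupp M) ∨ (t % 2 = 1 ∧ p t ∉ mSupp N)) := by
  classical
  set B := Fintype.card (V ⊕ V) with hB
  set P : ℕ → Prop := fun t => ∃ p, GoodPath M N x p t with hP
  have hbound : ∀ s, P s → s ≤ B := by
    rintro s ⟨p, hp⟩
    have : (Finset.range (s+1)).card ≤ (Finset.univ : Finset (V ⊕ V)).card := by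
      apply Finset.card_le_card_of_injOn (fun i => p i)
      · intro _ _; exact Finset.mem_univ _
      · intro i hi j hj hij
        exact hp.2.2.2 i j (by simpa using Nat.lt_succ_iff.1 (Finset.mem_range.1 hi))
          (by simpa using Nat.lt_succ_iff.1 (Finset.mem_range.1 hj)) hij
    rw [Finset.card_range, Finset.card_univ] at this
    omega
  have hP1 : P 1 := gp_base hM hxN hxM
  have h1B : 1 ≤ B := hbound 1 hP1
  set T := Nat.findGreatest P B with hT
  have hPT : P T := Nat.findGreatest_spec h1B hP1
  have hT1 : 1 ≤ T := Nat.le_findGreatest h1B hP1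
  have hnext : ¬ P (T + 1) := by
    by_cases h : T + 1 ≤ B
    · exact Nat.findGreatest_is_greatest (by omega) h
    · intro hP'
      exact h (hbound _ hP')
  obtain ⟨p, hp⟩ := hPT
  refine ⟨p, T, hp, ?_⟩
  by_contra hc
  push_neg at hc
  apply hnext
  rcases Nat.even_or_odd T with hpar | hpar
  · have hpar : T % 2 = 0 := Nat.even_iff.1 hpar
    exact gp_ext hM hN hp hxN (Or.inl ⟨hpar, hc.1 hpar⟩)
  · have hpar : T % 2 = 1 := Nat.odd_iff.1 hpar
    exact gp_ext hM hN hp hxN (Or.inr ⟨hpar, hc.2 hpar⟩)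

/-- Augmenting: an alternating path ending `M`-style yields a bigger matching. -/
lemma gp_aug (hM : IsMatchingOn (whisker H) F M) (hN : IsMatchingOn (whisker H) F N)
    (hgp : GoodPath M N x p t) (hxN : x ∉ mSupp N) (hpar : t % 2 = 1)
    (hstop : p t ∉ mSupp N) :
    ∃ K, IsMatchingOn (whisker H) F K ∧ K.card = N.card + 1 := by
  classical
  set Pev := ((Finset.range t).filter (fun i => i % 2 = 0)).image
    (fun i => s(p i, p (i+1))) with hPev
  set Pod := ((Finset.range t).filter (fun i => i % 2 = 1)).image
    (fun i => s(p i, p (i+1))) with hPod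
  have hmemPev : ∀ e ∈ Pev, ∃ i, i < t ∧ i % 2 = 0 ∧ e = s(p i, p (i+1)) := by
    intro e he
    obtain ⟨i, hi, rfl⟩ := Finset.mem_image.1 he
    rw [Finset.mem_filter, Finset.mem_range] at hi
    exact ⟨i, hi.1, hi.2, rfl⟩
  have hmemPod : ∀ e ∈ Pod, ∃ i, i < t ∧ i % 2 = 1 ∧ e = s(p i, p (i+1)) := by
    intro e he
    obtain ⟨i, hi, rfl⟩ := Finset.mem_image.1 he
    rw [Finset.mem_filter, Finset.mem_range] at hi
    exact ⟨i, hi.1, hi.2, rfl⟩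
  have hPevM : ∀ e ∈ Pev, e ∈ M ∧ e ∉ N := by
    intro e he
    obtain ⟨i, hi, hp2, rfl⟩ := hmemPev e he
    exact gp_edge_M hgp hi hp2
  have hPodN : ∀ e ∈ Pod, e ∈ N ∧ e ∉ M := by
    intro e he
    obtain ⟨i, hi, hp2, rfl⟩ := hmemPod e he
    exact gp_edge_N hgp hi hp2
  have hver : ∀ g ∈ N, ∀ j, j ≤ t → p j ∈ g → g ∈ Pod := by
    intro g hg j hj hpj
    rcases gp_N_loc hN hgp hxN hj hg hpj with ⟨h1, h2, h3⟩ | ⟨h1, h2, h3⟩ | ⟨rfl, _⟩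
    · exact Finset.mem_image.2 ⟨j, Finset.mem_filter.2 ⟨Finset.mem_range.2 h2, h1⟩, h3.symm⟩
    · refine Finset.mem_image.2 ⟨j - 1, Finset.mem_filter.2
        ⟨Finset.mem_range.2 (by omega), by omega⟩, ?_⟩
      rw [show j - 1 + 1 = j by omega]
      exact h3.symm
    · exact absurd ⟨g, hg, hpj⟩ hstop
  refine ⟨Pev ∪ (N \ Pod), ⟨?_, ?_, ?_⟩, ?_⟩
  · intro e he
    rcases Finset.mem_union.1 he with h | h
    · exact hM.1 e (hPevM e h).1
    · exact hN.1 e (Finset.mem_sdiff.1 h).1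
  · intro e he v hv
    rcases Finset.mem_union.1 he with h | h
    · exact hM.2.1 e (hPevM e h).1 v hv
    · exact hN.2.1 e (Finset.mem_sdiff.1 h).1 v hv
  · intro e1 he1 e2 he2 hne v hv hv2
    rcases Finset.mem_union.1 he1 with h1 | h1 <;> rcases Finset.mem_union.1 he2 with h2 | h2
    · obtain ⟨i, hi, hi2, rfl⟩ := hmemPev e1 h1
      obtain ⟨j, hj, hj2, rfl⟩ := hmemPev e2 h2
      have hij : i ≠ j := fun h => hne (by rw [h])
      rw [Sym2.mem_iff] at hv hv2
      have hinj := hgp.2.2.2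
      rcases hv with h | h <;> rcases hv2 with h' | h' <;>
        [ (have := hinj i j (by omega) (by omega) (h.symm.trans h'));
          (have := hinj i (j+1) (by omega) (by omega) (h.symm.trans h'));
          (have := hinj (i+1) j (by omega) (by omega) (h.symm.trans h'));
          (have := hinj (i+1) (j+1) (by omega) (by omega) (h.symm.trans h'))] <;>
        omega
    · obtain ⟨i, hi, hi2, rfl⟩ := hmemPev e1 h1
      rw [Finset.mem_sdiff] at h2
      rw [Sym2.mem_iff] at hv
      rcases hv with h | h
      · exact h2.2 (hver e2 h2.1 i (by omega) (h ▸ hv2))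
      · exact h2.2 (hver e2 h2.1 (i+1) (by omega) (h ▸ hv2))
    · obtain ⟨j, hj, hj2, rfl⟩ := hmemPev e2 h2
      rw [Finset.mem_sdiff] at h1
      rw [Sym2.mem_iff] at hv2
      rcases hv2 with h | h
      · exact h1.2 (hver e1 h1.1 j (by omega) (h ▸ hv))
      · exact h1.2 (hver e1 h1.1 (j+1) (by omega) (h ▸ hv))
    · exact hN.2.2 e1 (Finset.mem_sdiff.1 h1).1 e2 (Finset.mem_sdiff.1 h2).1 hne v hv hv2
  · have hdisj : Disjoint Pev (N \ Pod) := by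
      rw [Finset.disjoint_left]
      intro e he he'
      exact (hPevM e he).2 (Finset.mem_sdiff.1 he').1
    have hPodsub : Pod ⊆ N := fun e he => (hPodN e he).1
    have hcPev : Pev.card = (t+1)/2 := by
      rw [hPev, Finset.card_image_of_injOn, (count_parity t).1]
      intro i hi j hj hij
      rw [Finset.mem_coe, Finset.mem_filter, Finset.mem_range] at hi hj
      exact gp_edge_inj hgp hi.1 hj.1 hij
    have hcPod : Pod.card = t/2 := by
      rw [hPod, Finset.card_image_of_injOn, (count_parity t).2]
      intro i hi j hj hij
      rw [Finset.mem_coe, Finset.mem_filter, Finset.mem_range] at hi hj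
      exact gp_edge_inj hgp hi.1 hj.1 hij
    have hle : Pod.card ≤ N.card := Finset.card_le_card hPodsub
    rw [Finset.card_union_of_disjoint hdisj, Finset.card_sdiff_of_subset hPodsub, hcPev, hcPod]
    omega

end Stmt11
namespace Stmt11
open Sum
set_option maxHeartbeats 2000000

variable {V : Type*} [DecidableEq V] {H : SimpleGraph V}
variable {q : ℕ} {F : Finset (V ⊕ V)}
variable {M N : Finset (Sym2 (V ⊕ V))} {x : V ⊕ V} {p : ℕ → V ⊕ V} {t : ℕ}

/-- In the terminal (swap) situation, if `M` is "minimal" then all path edges are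
H-edges and all path vertices are original vertices. -/
lemma gp_allH (hM : IsMatchingOn (whisker H) F M) (hN : IsMatchingOn (whisker H) F N)
    (hgp : GoodPath M N x p t) (hxN : x ∉ mSupp N) (hpar : t % 2 = 0)
    (hstop : p t ∉ mSupp M) (hx : ∃ u : V, x = inl u)
    (hB : ∀ e ∈ M, Htype e → ∀ a : V, inl a ∈ e → inr a ∉ F) :
    (∀ i, i < t → Htype (s(p i, p (i+1)))) ∧ (∀ j, j ≤ t → ∃ a : V, p j = inl a) := by
  have ht2 : 2 ≤ t := by have := hgp.1; omega
  -- no vertex of the path except possibly the last one is a whisker vertex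
  have hnoinr : ∀ a : ℕ, a < t → ∀ c : V, p a ≠ inr c := by
    intro a ha c hac
    rcases Nat.eq_zero_or_pos a with rfl | ha0
    · obtain ⟨u, hu⟩ := hx
      rw [hgp.2.1, hu] at hac
      simp at hac
    · have h := hgp.2.2.1 (a-1) (by omega)
      have h' := hgp.2.2.1 a ha
      rw [show a - 1 + 1 = a by omega] at h
      have h1 : (a - 1) % 2 = 0 ∨ (a - 1) % 2 = 1 := by omega
      rcases h1 with hp1 | hp1
      · -- edge (a-1) is an M-edge, edge a is an N-edge
        have hMe := (h.1 hp1).1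
        have hNe := (h'.2 (by omega)).1
        have he1 : s(p (a-1), p a) = s(inl c, inr c) :=
          inr_mem_edge (hM.1 _ hMe) (by rw [hac]; simp)
        have he2 : s(p a, p (a+1)) = s(inl c, inr c) :=
          inr_mem_edge (hN.1 _ hNe) (by rw [hac]; simp)
        have : s(p (a-1), p a) ∈ N := by rw [he1.trans he2.symm]; exact hNe
        exact (h.1 hp1).2 this
      · have hNe := (h.2 hp1).1
        have hMe := (h'.1 (by omega)).1
        have he1 : s(p (a-1), p a) = s(inl c, inr c) :=
          inr_mem_edge (hN.1 _ hNe) (by rw [hac]; simp)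
        have he2 : s(p a, p (a+1)) = s(inl c, inr c) :=
          inr_mem_edge (hM.1 _ hMe) (by rw [hac]; simp)
        have : s(p (a-1), p a) ∈ M := by rw [he1.trans he2.symm]; exact hMe
        exact (h.2 hp1).2 this
  have stepA : ∀ i, i < t → i % 2 = 0 → Htype (s(p i, p (i+1))) := by
    intro i hi hip
    by_contra hH
    have heM := (gp_edge_M hgp hi hip).1
    obtain ⟨c, hc⟩ := not_Htype_elim (hM.1 _ heM) hH
    rw [Sym2.eq_iff] at hc
    rcases hc with ⟨h1, h2⟩ | ⟨h1, h2⟩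
    · rcases lt_or_eq_of_le (Nat.succ_le_of_lt hi) with hlt | heqt
      · exact hnoinr (i+1) hlt c h2
      · refine hstop ⟨_, heM, ?_⟩
        rw [← heqt]
        simp
    · exact hnoinr i hi c h1
  have hvert : ∀ j, j ≤ t → ∃ a : V, p j = inl a := by
    intro j hj
    cases hpj : p j with
    | inl a => exact ⟨a, rfl⟩
    | inr c =>
      exfalso
      rcases lt_or_eq_of_le hj with hlt | heq
      · exact hnoinr j hlt c hpj
      · -- j = t
        rw [heq] at hpj
        have hNe := gp_edge_N hgp (show t - 1 < t by omega) (by omega)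
        rw [show t - 1 + 1 = t by omega] at hNe
        have he : s(p (t-1), p t) = s(inl c, inr c) :=
          inr_mem_edge (hN.1 _ hNe.1) (by rw [hpj]; simp)
        have hprev : p (t-1) = inl c := by
          cases hpt1 : p (t-1) with
          | inl a =>
            have : (inl a : V ⊕ V) ∈ s(inl c, inr c) := by
              rw [← he, ← hpt1]; simp
            rw [Sym2.mem_iff] at this
            rcases this with h | h
            · exact h
            · simp at h
          | inr d => exact absurd hpt1 (hnoinr (t-1) (by omega) d)
        have hMe := gp_edge_M hgp (show t - 2 < t by omega) (by omega)
        have hHt : Htype (s(p (t-2), p (t-2+1))) := stepA (t-2) (by omega) (by omega)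
        have hmem : inl c ∈ s(p (t-2), p (t-2+1)) := by
          rw [show t - 2 + 1 = t - 1 by omega, hprev]; simp
        have hcF : inr c ∉ F := hB _ hMe.1 hHt c hmem
        refine hcF ?_
        have : (inr c : V ⊕ V) ∈ s(p (t-1), p t) := by rw [he]; simp
        exact hN.2.1 _ hNe.1 _ this
  refine ⟨?_, hvert⟩
  intro i hi
  have h1 : i % 2 = 0 ∨ i % 2 = 1 := by omega
  rcases h1 with hip | hip
  · exact stepA i hi hip
  · obtain ⟨a, ha⟩ := hvert i (by omega)
    obtain ⟨b, hb⟩ := hvert (i+1) (by omega)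
    rw [ha, hb]
    exact Htype_of_inl

/-- Swapping along a maximal alternating path in the terminal situation. -/
lemma gp_swap (hM : IsMatchingOn (whisker H) F M) (hN : IsMatchingOn (whisker H) F N)
    (hgp : GoodPath M N x p t) (hxN : x ∉ mSupp N) (hpar : t % 2 = 0)
    (hstop : p t ∉ mSupp M) (hallH : ∀ i, i < t → Htype (s(p i, p (i+1)))) :
    ∃ M₁, IsMatchingOn (whisker H) F M₁ ∧ M₁.card = M.card ∧ HC M₁ = HC M ∧
      x ∉ mSupp M₁ ∧ s(p 1, p (1+1)) ∈ M₁ ∧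
      (∀ z, z ∉ mSupp M → (∀ j, j ≤ t → z ≠ p j) → z ∉ mSupp M₁) := by
  classical
  have ht2 : 2 ≤ t := by have := hgp.1; omega
  have hinj := hgp.2.2.2
  set Pev := ((Finset.range t).filter (fun i => i % 2 = 0)).image
    (fun i => s(p i, p (i+1))) with hPev
  set Pod := ((Finset.range t).filter (fun i => i % 2 = 1)).image
    (fun i => s(p i, p (i+1))) with hPod
  have hmemPev : ∀ e ∈ Pev, ∃ i, i < t ∧ i % 2 = 0 ∧ e = s(p i, p (i+1)) := by
    intro e he
    obtain ⟨i, hi, rfl⟩ := Finset.mem_image.1 he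
    rw [Finset.mem_filter, Finset.mem_range] at hi
    exact ⟨i, hi.1, hi.2, rfl⟩
  have hmemPod : ∀ e ∈ Pod, ∃ i, i < t ∧ i % 2 = 1 ∧ e = s(p i, p (i+1)) := by
    intro e he
    obtain ⟨i, hi, rfl⟩ := Finset.mem_image.1 he
    rw [Finset.mem_filter, Finset.mem_range] at hi
    exact ⟨i, hi.1, hi.2, rfl⟩
  have hPevM : ∀ e ∈ Pev, e ∈ M ∧ e ∉ N := by
    intro e he
    obtain ⟨i, hi, hp2, rfl⟩ := hmemPev e he
    exact gp_edge_M hgp hi hp2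
  have hPodN : ∀ e ∈ Pod, e ∈ N ∧ e ∉ M := by
    intro e he
    obtain ⟨i, hi, hp2, rfl⟩ := hmemPod e he
    exact gp_edge_N hgp hi hp2
  have hver : ∀ g ∈ M, ∀ j, j ≤ t → p j ∈ g → g ∈ Pev := by
    intro g hg j hj hpj
    rcases gp_M_loc hM hgp hj hg hpj with ⟨h1, h2, h3⟩ | ⟨h1, h3⟩ | ⟨rfl, _⟩
    · exact Finset.mem_image.2 ⟨j, Finset.mem_filter.2 ⟨Finset.mem_range.2 h2, h1⟩, h3.symm⟩
    · refine Finset.mem_image.2 ⟨j - 1, Finset.mem_filter.2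
        ⟨Finset.mem_range.2 (by omega), by omega⟩, ?_⟩
      rw [show j - 1 + 1 = j by omega]
      exact h3.symm
    · exact absurd ⟨g, hg, hpj⟩ hstop
  have hPevsub : Pev ⊆ M := fun e he => (hPevM e he).1
  have hPodinjOn : Set.InjOn (fun i => s(p i, p (i+1)))
      ((Finset.range t).filter (fun i => i % 2 = 1)) := by
    intro i hi j hj hij
    rw [Finset.mem_coe, Finset.mem_filter, Finset.mem_range] at hi hj
    exact gp_edge_inj hgp hi.1 hj.1 hij
  have hPevinjOn : Set.InjOn (fun i => s(p i, p (i+1)))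
      ((Finset.range t).filter (fun i => i % 2 = 0)) := by
    intro i hi j hj hij
    rw [Finset.mem_coe, Finset.mem_filter, Finset.mem_range] at hi hj
    exact gp_edge_inj hgp hi.1 hj.1 hij
  have hcPev : Pev.card = (t+1)/2 := by
    rw [hPev, Finset.card_image_of_injOn hPevinjOn, (count_parity t).1]
  have hcPod : Pod.card = t/2 := by
    rw [hPod, Finset.card_image_of_injOn hPodinjOn, (count_parity t).2]
  refine ⟨Pod ∪ (M \ Pev), ⟨?_, ?_, ?_⟩, ?_, ?_, ?_, ?_, ?_⟩
  · intro e he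
    rcases Finset.mem_union.1 he with h | h
    · exact hN.1 e (hPodN e h).1
    · exact hM.1 e (Finset.mem_sdiff.1 h).1
  · intro e he v hv
    rcases Finset.mem_union.1 he with h | h
    · exact hN.2.1 e (hPodN e h).1 v hv
    · exact hM.2.1 e (Finset.mem_sdiff.1 h).1 v hv
  · intro e1 he1 e2 he2 hne v hv hv2
    rcases Finset.mem_union.1 he1 with h1 | h1 <;> rcases Finset.mem_union.1 he2 with h2 | h2
    · obtain ⟨i, hi, hi2, rfl⟩ := hmemPod e1 h1
      obtain ⟨j, hj, hj2, rfl⟩ := hmemPod e2 h2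
      have hij : i ≠ j := fun h => hne (by rw [h])
      rw [Sym2.mem_iff] at hv hv2
      rcases hv with h | h <;> rcases hv2 with h' | h' <;>
        [ (have := hinj i j (by omega) (by omega) (h.symm.trans h'));
          (have := hinj i (j+1) (by omega) (by omega) (h.symm.trans h'));
          (have := hinj (i+1) j (by omega) (by omega) (h.symm.trans h'));
          (have := hinj (i+1) (j+1) (by omega) (by omega) (h.symm.trans h'))] <;>
        omega
    · obtain ⟨i, hi, hi2, rfl⟩ := hmemPod e1 h1
      rw [Finset.mem_sdiff] at h2
      rw [Sym2.mem_iff] at hv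
      rcases hv with h | h
      · exact h2.2 (hver e2 h2.1 i (by omega) (h ▸ hv2))
      · exact h2.2 (hver e2 h2.1 (i+1) (by omega) (h ▸ hv2))
    · obtain ⟨j, hj, hj2, rfl⟩ := hmemPod e2 h2
      rw [Finset.mem_sdiff] at h1
      rw [Sym2.mem_iff] at hv2
      rcases hv2 with h | h
      · exact h1.2 (hver e1 h1.1 j (by omega) (h ▸ hv))
      · exact h1.2 (hver e1 h1.1 (j+1) (by omega) (h ▸ hv))
    · exact hM.2.2 e1 (Finset.mem_sdiff.1 h1).1 e2 (Finset.mem_sdiff.1 h2).1 hne v hv hv2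
  · -- cardinality
    have hdisj : Disjoint Pod (M \ Pev) := by
      rw [Finset.disjoint_left]
      intro e he he'
      exact (hPodN e he).2 (Finset.mem_sdiff.1 he').1
    have hle : Pev.card ≤ M.card := Finset.card_le_card hPevsub
    rw [Finset.card_union_of_disjoint hdisj, Finset.card_sdiff_of_subset hPevsub, hcPev, hcPod]
    omega
  · -- H-edge count
    have hallPod : ∀ e ∈ Pod, Htype e := by
      intro e he
      obtain ⟨i, hi, _, rfl⟩ := hmemPod e he
      exact hallH i hi
    have hallPev : ∀ e ∈ Pev, Htype e := by
      intro e he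
      obtain ⟨i, hi, _, rfl⟩ := hmemPev e he
      exact hallH i hi
    have hdisj : Disjoint (Pod.filter Htype) ((M \ Pev).filter Htype) := by
      rw [Finset.disjoint_left]
      intro e he he'
      exact (hPodN e (Finset.mem_filter.1 he).1).2
        (Finset.mem_sdiff.1 (Finset.mem_filter.1 he').1).1
    have hsub : Pev ⊆ M.filter Htype := fun e he =>
      Finset.mem_filter.2 ⟨hPevsub he, hallPev e he⟩
    have hfil : (M \ Pev).filter Htype = (M.filter Htype) \ Pev := by
      ext e
      simp only [Finset.mem_filter, Finset.mem_sdiff]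
      tauto
    rw [HC, HC, Finset.filter_union, Finset.card_union_of_disjoint hdisj,
      Finset.filter_true_of_mem hallPod, hfil, Finset.card_sdiff_of_subset hsub, hcPod]
    have := Finset.card_le_card hsub
    rw [hcPev] at this
    omega
  · -- x is exposed
    rintro ⟨e, he, hxe⟩
    rcases Finset.mem_union.1 he with h | h
    · obtain ⟨i, hi, hi2, rfl⟩ := hmemPod e h
      rw [Sym2.mem_iff] at hxe
      rcases hxe with hh | hh
      · have := hinj 0 i (by omega) (by omega) (hgp.2.1.trans hh)
        omega
      · have := hinj 0 (i+1) (by omega) (by omega) (hgp.2.1.trans hh)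
        omega
    · rw [Finset.mem_sdiff] at h
      have hx0 : p 0 ∈ e := by rw [hgp.2.1]; exact hxe
      exact h.2 (hver e h.1 0 (by omega) hx0)
  · -- the second edge of the path survives
    refine Finset.mem_union_left _ (Finset.mem_image.2 ⟨1, Finset.mem_filter.2
      ⟨Finset.mem_range.2 (by omega), by omega⟩, rfl⟩)
  · -- exposure of untouched vertices
    intro z hzM hznew
    rintro ⟨e, he, hze⟩
    rcases Finset.mem_union.1 he with h | h
    · obtain ⟨i, hi, hi2, rfl⟩ := hmemPod e h
      rw [Sym2.mem_iff] at hze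
      rcases hze with hh | hh
      · exact hznew i (by omega) hh
      · exact hznew (i+1) (by omega) hh
    · exact hzM ⟨e, (Finset.mem_sdiff.1 h).1, hze⟩

end Stmt11
namespace Stmt11
open Sum
set_option maxHeartbeats 2000000

variable {V : Type*} [DecidableEq V] {H : SimpleGraph V}
variable {q : ℕ} {F : Finset (V ⊕ V)}
variable {M N : Finset (Sym2 (V ⊕ V))} {x : V ⊕ V} {p : ℕ → V ⊕ V} {t : ℕ}

/-- The number of `M`-edges on a good path with all edges H-edges bounds `(t+1)/2 ≤ HC M`. -/
lemma gp_count (hgp : GoodPath M N x p t)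
    (hallH : ∀ i, i < t → Htype (s(p i, p (i+1)))) : (t+1)/2 ≤ HC M := by
  classical
  have hsub : ((Finset.range t).filter (fun i => i % 2 = 0)).image
      (fun i => s(p i, p (i+1))) ⊆ M.filter Htype := by
    intro e he
    obtain ⟨i, hi, rfl⟩ := Finset.mem_image.1 he
    rw [Finset.mem_filter, Finset.mem_range] at hi
    exact Finset.mem_filter.2 ⟨(gp_edge_M hgp hi.1 hi.2).1, hallH i hi.1⟩
  have hinj : Set.InjOn (fun i => s(p i, p (i+1)))
      ((Finset.range t).filter (fun i => i % 2 = 0)) := by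
    intro i hi j hj hij
    rw [Finset.mem_coe, Finset.mem_filter, Finset.mem_range] at hi hj
    exact gp_edge_inj hgp hi.1 hj.1 hij
  have := Finset.card_le_card hsub
  rw [Finset.card_image_of_injOn hinj, (count_parity t).1] at this
  exact this

/-- Build a walk in `H` along a chain of adjacent vertices. -/
lemma walk_of_chain (k : ℕ) (c : ℕ → V) (hadj : ∀ i, i < k → H.Adj (c i) (c (i+1))) :
    ∃ w : H.Walk (c 0) (c k), w.length = k ∧
      w.edges = (List.range k).map (fun i => s(c i, c (i+1))) ∧
      w.support = (List.range (k+1)).map c := by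
  induction k with
  | zero => exact ⟨SimpleGraph.Walk.nil, by simp, by simp, by simp [List.range_succ]⟩
  | succ n ih =>
    obtain ⟨w, hlen, hedges, hsupp⟩ := ih (fun i hi => hadj i (by omega))
    refine ⟨w.concat (hadj n (by omega)), ?_, ?_, ?_⟩
    · rw [SimpleGraph.Walk.length_concat, hlen]
    · rw [SimpleGraph.Walk.edges_concat, hedges, List.range_succ, List.map_append]
      simp
    · rw [SimpleGraph.Walk.support_concat, hsupp, List.range_succ (n := n+1),
        List.map_append]
      simp

/-- A closed chain of distinct adjacent vertices yields a cycle. -/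
lemma cycle_of_chain (k : ℕ) (c : ℕ → V) (hk : 2 ≤ k)
    (hadj : ∀ i, i < k → H.Adj (c i) (c (i+1)))
    (hinj : ∀ i j, i ≤ k → j ≤ k → c i = c j → i = j)
    (hclose : H.Adj (c k) (c 0)) :
    ∃ w : H.Walk (c k) (c k), w.IsCycle ∧ w.length = k + 1 := by
  obtain ⟨w, hlen, hedges, hsupp⟩ := walk_of_chain k c hadj
  refine ⟨SimpleGraph.Walk.cons hclose w, ?_, by simp [hlen]⟩
  rw [SimpleGraph.Walk.cons_isCycle_iff]
  constructor
  · rw [SimpleGraph.Walk.isPath_def, hsupp]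
    refine List.Nodup.map_on ?_ List.nodup_range
    intro i hi j hj hij
    rw [List.mem_range] at hi hj
    exact hinj i j (by omega) (by omega) hij
  · rw [hedges]
    intro hmem
    obtain ⟨i, hi, heq⟩ := List.mem_map.1 hmem
    rw [List.mem_range] at hi
    rw [Sym2.eq_iff] at heq
    rcases heq with ⟨h1, h2⟩ | ⟨h1, h2⟩
    · have := hinj i k (by omega) le_rfl h1
      omega
    · have := hinj i 0 (by omega) (by omega) h1
      have := hinj (i+1) k (by omega) le_rfl h2
      omega

end Stmt11
/-- if `H` contains an odd cycle, `ℓ` is the length of a shortest odd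
cycle, `F` is a facet of `MF^q(W(H))`, and `f ⊆ F` is a face carrying exactly `q-1`
disjoint edges of which `m < ⌊ℓ/2⌋` lie in `E(H)`, then `|F| = n + q - 1`. -/
theorem facet_card_of_few_H_edges
    {V : Type*} [Fintype V] [DecidableEq V] (H : SimpleGraph V)
    (n : ℕ) (hn : Fintype.card V = n) (ℓ : ℕ) (hodd : Odd ℓ)
    (hcyc : ∃ (v : V) (w : H.Walk v v), w.IsCycle ∧ w.length = ℓ)
    (hmin : ∀ (v : V) (w : H.Walk v v), w.IsCycle → Odd w.length → ℓ ≤ w.length)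
    (q : ℕ) (hq : 1 ≤ q)
    (F f : Finset (V ⊕ V)) (hF : IsFacet (MFFace (whisker H) q) F) (hfF : f ⊆ F)
    (hface : MFFace (whisker H) q f)
    (M : Finset (Sym2 (V ⊕ V))) (hM : IsMatchingOn (whisker H) f M)
    (hMcard : M.card = q - 1)
    (Mh : Finset (Sym2 (V ⊕ V)))
    (hMh : ∀ e, e ∈ Mh ↔ e ∈ M ∧ ∀ v ∈ e, ∃ a : V, v = Sum.inl a)
    (m : ℕ) (hm : Mh.card = m) (hmℓ : m < ℓ / 2) :
    F.card = n + q - 1 := by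
  classical
  obtain ⟨v0, w0, hw0c, hw0l⟩ := hcyc
  have hMF : IsMatchingOn (whisker H) F M := Stmt11.matchingOn_mono hfF hM
  have hHCM : Stmt11.HC M = m := by
    rw [Stmt11.HC, ← hm]
    congr 1
    ext e
    rw [Finset.mem_filter, hMh e]
    rfl
  set S := Finset.univ.filter
    (fun K : Finset (Sym2 (V ⊕ V)) => IsMatchingOn (whisker H) F K ∧ K.card = q - 1)
    with hS
  have hMS : M ∈ S := Finset.mem_filter.2 ⟨Finset.mem_univ _, hMF, hMcard⟩
  obtain ⟨M₀, hM₀S, hM₀min⟩ := Finset.exists_min_image S Stmt11.HC ⟨M, hMS⟩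
  rw [hS, Finset.mem_filter] at hM₀S
  obtain ⟨-, hM₀, hM₀c⟩ := hM₀S
  have hmin' : ∀ K, IsMatchingOn (whisker H) F K → K.card = q - 1 →
      Stmt11.HC M₀ ≤ Stmt11.HC K :=
    fun K h1 h2 => hM₀min K (Finset.mem_filter.2 ⟨Finset.mem_univ _, h1, h2⟩)
  have hBprop := Stmt11.min_B hM₀ hM₀c hmin'
  have hHCm : Stmt11.HC M₀ ≤ m := hHCM ▸ hM₀min M hMS
  set A := Finset.univ.filter (fun i : V => Sum.inl i ∈ F ∧ Sum.inr i ∈ F) with hA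
  have hcardF : F.card = n + A.card := by
    rw [← hn]; exact Stmt11.card_F_eq (Stmt11.pairs_cover hF)
  have hAle : A.card ≤ q - 1 := by
    by_contra hc
    push_neg at hc
    obtain ⟨S', hS'A, hS'c⟩ := Finset.exists_subset_card_eq (show q ≤ A.card by omega)
    have hprops : ∀ i ∈ S', Sum.inl i ∈ F ∧ Sum.inr i ∈ F := fun i hi =>
      (Finset.mem_filter.1 (hS'A hi)).2
    obtain ⟨hmatch, hcard⟩ := Stmt11.whisker_matching (H := H) hprops
    exact Stmt11.no_q_matching hF.1 hmatch (by rw [hcard, hS'c])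
  suffices hge : q - 1 ≤ A.card by
    rw [hcardF]; omega
  by_contra hlt
  push_neg at hlt
  -- M₀ has an H-edge
  have hwcount : (M₀.filter (fun e => ¬ Stmt11.Htype e)).card ≤ A.card := by
    apply Finset.card_le_card_of_injOn
      (fun e => if h : ∃ j : V, e = s(Sum.inl j, Sum.inr j) then h.choose else v0)
    · intro e he
      rw [Finset.mem_coe, Finset.mem_filter] at he
      obtain ⟨j, hj⟩ := Stmt11.not_Htype_elim (hM₀.1 e he.1) he.2
      have hex : ∃ j : V, e = s(Sum.inl j, Sum.inr j) := ⟨j, hj⟩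
      dsimp only
      rw [dif_pos hex]
      have hch : hex.choose = j := by
        have h2 := hex.choose_spec.symm.trans hj
        rw [Sym2.eq_iff] at h2
        rcases h2 with ⟨h3, -⟩ | ⟨h3, -⟩ <;> simp_all
      rw [hch, hA, Finset.mem_coe, Finset.mem_filter]
      exact ⟨Finset.mem_univ _, hM₀.2.1 e he.1 _ (by rw [hj]; simp),
        hM₀.2.1 e he.1 _ (by rw [hj]; simp)⟩
    · intro e he e' he' heq
      rw [Finset.mem_coe, Finset.mem_filter] at he he'
      obtain ⟨j, hj⟩ := Stmt11.not_Htype_elim (hM₀.1 e he.1) he.2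
      obtain ⟨j', hj'⟩ := Stmt11.not_Htype_elim (hM₀.1 e' he'.1) he'.2
      have hex : ∃ j : V, e = s(Sum.inl j, Sum.inr j) := ⟨j, hj⟩
      have hex' : ∃ j : V, e' = s(Sum.inl j, Sum.inr j) := ⟨j', hj'⟩
      dsimp only at heq
      rw [dif_pos hex, dif_pos hex'] at heq
      rw [hex.choose_spec, hex'.choose_spec, heq]
  have hsplit := Finset.card_filter_add_card_filter_not
    (s := M₀) (p := Stmt11.Htype)
  have hHC1 : 0 < (M₀.filter Stmt11.Htype).card := by omega
  obtain ⟨e₀, he₀⟩ := Finset.card_pos.1 hHC1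
  rw [Finset.mem_filter] at he₀
  obtain ⟨u, v, huv, he₀eq⟩ := Stmt11.Htype_elim (hM₀.1 e₀ he₀.1) he₀.2
  have huE : Sum.inl u ∈ e₀ := by rw [he₀eq]; simp
  have hvE : Sum.inl v ∈ e₀ := by rw [he₀eq]; simp
  have hBu : Sum.inr u ∉ F := hBprop e₀ he₀.1 he₀.2 u huE
  have hBv : Sum.inr v ∉ F := hBprop e₀ he₀.1 he₀.2 v hvE
  obtain ⟨N, hN, hNc, hNu⟩ := Stmt11.exists_avoiding hF hBu
  obtain ⟨p, t, hgp, hstopcase⟩ := Stmt11.gp_max hM₀ hN hNu ⟨e₀, he₀.1, huE⟩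
  rcases hstopcase with hcase | ⟨hpar, hstop⟩
  swap
  · obtain ⟨K, hK, hKc⟩ := Stmt11.gp_aug hM₀ hN hgp hNu hpar hstop
    exact Stmt11.no_q_matching hF.1 hK (by rw [hKc, hNc]; omega)
  obtain ⟨hpar, hstop⟩ := hcase
  have hxu : ∃ u' : V, (Sum.inl u : V ⊕ V) = Sum.inl u' := ⟨u, rfl⟩
  obtain ⟨hallH, hvert⟩ := Stmt11.gp_allH hM₀ hN hgp hNu hpar hstop hxu hBprop
  obtain ⟨M₁, hM₁, hM₁c, hM₁HC, hM₁x, hM₁e, hM₁z⟩ :=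
    Stmt11.gp_swap hM₀ hN hgp hNu hpar hstop hallH
  have hM₁c' : M₁.card = q - 1 := by rw [hM₁c, hM₀c]
  have hmin₁ : ∀ K, IsMatchingOn (whisker H) F K → K.card = q - 1 →
      Stmt11.HC M₁ ≤ Stmt11.HC K := fun K h1 h2 => by
    rw [hM₁HC]; exact hmin' K h1 h2
  have hBprop1 := Stmt11.min_B hM₁ hM₁c' hmin₁
  have ht2 : 2 ≤ t := by have := hgp.1; omega
  have hp0 : p 0 = Sum.inl u := hgp.2.1
  have hedge0 := Stmt11.gp_edge_M hgp (show 0 < t by omega) (by norm_num)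
  have he0eq : s(p 0, p (0+1)) = e₀ :=
    Stmt11.matching_unique hM₀ hedge0.1 he₀.1 (by rw [hp0]; simp) huE
  have hp1 : p 1 = Sum.inl v := by
    rw [he₀eq, Sym2.eq_iff] at he0eq
    rcases he0eq with ⟨h1, h2⟩ | ⟨h1, h2⟩
    · exact h2
    · exact absurd (Sum.inl_injective (hp0.symm.trans h1)) huv.ne
  obtain ⟨N', hN', hN'c, hN'v⟩ := Stmt11.exists_avoiding hF hBv
  have hvM₁ : (Sum.inl v : V ⊕ V) ∈ mSupp M₁ :=
    ⟨s(p 1, p (1+1)), hM₁e, by rw [← hp1]; simp⟩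
  obtain ⟨p', t', hgp', hstop'⟩ := Stmt11.gp_max hM₁ hN' hN'v hvM₁
  rcases hstop' with hcase' | ⟨hpar', hstop''⟩
  swap
  · obtain ⟨K, hK, hKc⟩ := Stmt11.gp_aug hM₁ hN' hgp' hN'v hpar' hstop''
    exact Stmt11.no_q_matching hF.1 hK (by rw [hKc, hN'c]; omega)
  obtain ⟨hpar', hstop''⟩ := hcase'
  have hxv : ∃ v' : V, (Sum.inl v : V ⊕ V) = Sum.inl v' := ⟨v, rfl⟩
  obtain ⟨hallH', hvert'⟩ := Stmt11.gp_allH hM₁ hN' hgp' hN'v hpar' hstop'' hxv hBprop1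
  have ht2' : 2 ≤ t' := by have := hgp'.1; omega
  by_cases hucase : ∃ j, j ≤ t' ∧ p' j = Sum.inl u
  · -- a short odd cycle, contradicting minimality of ℓ
    obtain ⟨j, hjle, hpj⟩ := hucase
    have hjt : j = t' := by
      by_contra hne
      have hjlt : j < t' := by omega
      refine hM₁x ?_
      rcases Nat.even_or_odd j with hpj2 | hpj2
      · have h := Stmt11.gp_edge_M hgp' hjlt (Nat.even_iff.1 hpj2)
        exact ⟨_, h.1, by rw [← hpj]; simp⟩
      · have hj2 : j % 2 = 1 := Nat.odd_iff.1 hpj2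
        have h := Stmt11.gp_edge_M hgp' (show j - 1 < t' by omega) (by omega)
        refine ⟨_, h.1, ?_⟩
        rw [show j - 1 + 1 = j by omega, ← hpj]
        simp
    set c : ℕ → V := fun i => if h : i ≤ t' then (hvert' i h).choose else u with hcdef
    have hcspec : ∀ i, i ≤ t' → p' i = Sum.inl (c i) := by
      intro i hi
      have : c i = (hvert' i hi).choose := by rw [hcdef]; exact dif_pos hi
      rw [this]
      exact (hvert' i hi).choose_spec
    have hadj : ∀ i, i < t' → H.Adj (c i) (c (i+1)) := by
      intro i hi
      have hedge : s(p' i, p' (i+1)) ∈ (whisker H).edgeSet := by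
        rcases Nat.even_or_odd i with h2 | h2
        · exact hM₁.1 _ (Stmt11.gp_edge_M hgp' hi (Nat.even_iff.1 h2)).1
        · exact hN'.1 _ (Stmt11.gp_edge_N hgp' hi (Nat.odd_iff.1 h2)).1
      rw [hcspec i (by omega), hcspec (i+1) (by omega)] at hedge
      exact Stmt11.adj_of_H_edge hedge
    have hcinj : ∀ i j, i ≤ t' → j ≤ t' → c i = c j → i = j := by
      intro i j hi hj hij
      apply hgp'.2.2.2 i j hi hj
      rw [hcspec i hi, hcspec j hj, hij]
    have hc0 : c 0 = v := by
      have h := hcspec 0 (by omega)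
      rw [hgp'.2.1] at h
      exact (Sum.inl_injective h).symm
    have hct : c t' = u := by
      have h := hcspec t' le_rfl
      rw [hjt] at hpj
      rw [hpj] at h
      exact (Sum.inl_injective h).symm
    have hclose : H.Adj (c t') (c 0) := by rw [hc0, hct]; exact huv
    obtain ⟨w, hwcyc, hwlen⟩ := Stmt11.cycle_of_chain t' c ht2' hadj hcinj hclose
    have hwodd : Odd w.length := by rw [hwlen]; exact Nat.odd_iff.2 (by omega)
    have hlb := hmin (c t') w hwcyc hwodd
    have hcount := Stmt11.gp_count hgp' hallH'
    rw [hM₁HC] at hcount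
    obtain ⟨sℓ, hsℓ⟩ := hodd
    rw [hwlen] at hlb
    omega
  · -- a `q`-matching, contradicting the facet being a face
    push_neg at hucase
    obtain ⟨M₂, hM₂, hM₂c, hM₂HC, hM₂x, hM₂e, hM₂z⟩ :=
      Stmt11.gp_swap hM₁ hN' hgp' hN'v hpar' hstop'' hallH'
    have hM₂u : (Sum.inl u : V ⊕ V) ∉ mSupp M₂ :=
      hM₂z _ hM₁x (fun j hj hju => hucase j hj hju.symm)
    set enew : Sym2 (V ⊕ V) := s(Sum.inl u, Sum.inl v) with hen
    have henG : enew ∈ (whisker H).edgeSet := by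
      rw [hen, SimpleGraph.mem_edgeSet]
      exact Or.inl ⟨u, v, rfl, rfl, huv⟩
    have henM₂ : enew ∉ M₂ := fun hmem => hM₂u ⟨enew, hmem, by rw [hen]; simp⟩
    have hKmatch : IsMatchingOn (whisker H) F (insert enew M₂) := by
      refine ⟨?_, ?_, ?_⟩
      · intro e he
        rcases Finset.mem_insert.1 he with rfl | h
        · exact henG
        · exact hM₂.1 e h
      · intro e he z hz
        rcases Finset.mem_insert.1 he with rfl | h
        · rw [hen, Sym2.mem_iff] at hz
          rcases hz with rfl | rfl
          · exact hM₀.2.1 e₀ he₀.1 _ huE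
          · exact hM₀.2.1 e₀ he₀.1 _ hvE
        · exact hM₂.2.1 e h z hz
      · intro e1 he1 e2 he2 hne z hz hz2
        rcases Finset.mem_insert.1 he1 with rfl | h1 <;>
          rcases Finset.mem_insert.1 he2 with rfl | h2
        · exact hne rfl
        · rw [hen, Sym2.mem_iff] at hz
          rcases hz with rfl | rfl
          · exact hM₂u ⟨e2, h2, hz2⟩
          · exact hM₂x ⟨e2, h2, hz2⟩
        · rw [hen, Sym2.mem_iff] at hz2
          rcases hz2 with rfl | rfl
          · exact hM₂u ⟨e1, h1, hz⟩
          · exact hM₂x ⟨e1, h1, hz⟩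
        · exact hM₂.2.2 e1 h1 e2 h2 hne z hz hz2
    exact Stmt11.no_q_matching hF.1 hKmatch
      (by rw [Finset.card_insert_of_notMem henM₂, hM₂c, hM₁c, hM₀c]; omega)
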